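/- Let R be a commutative Noetherian ring, let i : M → I be a morphism of R-modules, and let E be an injective cogenerator. If the induced morphism Hom_R(i,E) : Hom_R(I,E) → Hom_R(M,E) is a flat cover, then i is an injective envelope. -/

import Mathlib

universe u

variable (R : Type u) [CommRing R]

/-- A morphism `f : F → M` with `F` flat is a flat precover if every morphism from a
flat module to `M` factors through `f`. -/
def IsFlatPrecover {F M : Type u} [AddCommGroup F] [AddCommGroup M] [Module R F]
    [Module R M] (f : F →ₗ[R] M) : Prop :=
  Module.Flat R F ∧
    ∀ (F' : Type u) [AddCommGroup F'] [Module R F'], Module.Flat R F' →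
      ∀ g : F' →ₗ[R] M, ∃ h : F' →ₗ[R] F, f ∘ₗ h = g

/-- A flat precover `f : F → M` is a flat cover if every `h : F → F` with `f ∘ h = f`
is an automorphism. -/
def IsFlatCover {F M : Type u} [AddCommGroup F] [AddCommGroup M] [Module R F]
    [Module R M] (f : F →ₗ[R] M) : Prop :=
  IsFlatPrecover R f ∧ ∀ h : F →ₗ[R] F, f ∘ₗ h = f → Function.Bijective h

/-- A morphism `i : M → E` is an injective envelope if `E` is injective, `i` is
injective, and the image of `i` is an essential submodule of `E`. -/
def IsInjectiveEnvelope {M E : Type u} [AddCommGroup M] [AddCommGroup E] [Module R M]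
    [Module R E] (i : M →ₗ[R] E) : Prop :=
  Module.Injective R E ∧ Function.Injective i ∧
    ∀ N : Submodule R E, N ≠ ⊥ → N ⊓ LinearMap.range i ≠ ⊥

/-- An injective cogenerator is an injective module `E` such that `Hom(N, E) ≠ 0`
for every nonzero module `N`. -/
def IsInjectiveCogenerator (E : Type u) [AddCommGroup E] [Module R E] : Prop :=
  Module.Injective R E ∧
    ∀ (N : Type u) [AddCommGroup N] [Module R N], (∃ x : N, x ≠ 0) →
      ∃ g : N →ₗ[R] E, g ≠ 0

open TensorProduct LinearMap in
section
open TensorProduct LinearMap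

section
variable {R : Type u} [CommRing R] {I E : Type u} [AddCommGroup I] [Module R I]
  [AddCommGroup E] [Module R E]

noncomputable def theta (X : Type u) [AddCommGroup X] [Module R X] :
    X ⊗[R] (I →ₗ[R] E) →ₗ[R] ((X →ₗ[R] I) →ₗ[R] E) :=
  TensorProduct.lift (((LinearMap.llcomp R (X →ₗ[R] I) I E).flip) ∘ₗ
    (LinearMap.applyₗ : X →ₗ[R] ((X →ₗ[R] I) →ₗ[R] I)))

@[simp] lemma theta_apply {X : Type u} [AddCommGroup X] [Module R X] (x : X)
    (ψ : I →ₗ[R] E) (f : X →ₗ[R] I) :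
    theta (R := R) (I := I) (E := E) X (x ⊗ₜ ψ) f = ψ (f x) := rfl

lemma theta_natural {X Y : Type u} [AddCommGroup X] [Module R X] [AddCommGroup Y]
    [Module R Y] (g : X →ₗ[R] Y) :
    (theta (R := R) (I := I) (E := E) Y) ∘ₗ (g.rTensor (I →ₗ[R] E)) =
      (LinearMap.lcomp R E (LinearMap.lcomp R I g)) ∘ₗ theta X := by
  ext x ψ f
  simp
end

section
variable {R : Type u} [CommRing R] {I E : Type u} [AddCommGroup I] [Module R I]
  [AddCommGroup E] [Module R E]

lemma theta_pi_surjective (n : ℕ) :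
    Function.Surjective (theta (R := R) (I := I) (E := E) (Fin n → R)) := by
  intro χ
  refine ⟨∑ i : Fin n, (fun j => if i = j then (1:R) else 0) ⊗ₜ
    (χ ∘ₗ ((LinearMap.smulRightₗ : ((Fin n → R) →ₗ[R] R) →ₗ[R] I →ₗ[R] _)
      (LinearMap.proj i))), ?_⟩
  apply LinearMap.ext
  intro f
  rw [map_sum, LinearMap.sum_apply]
  have : ∀ i : Fin n, (theta (R := R) (I := I) (E := E) (Fin n → R)
      ((fun j => if i = j then (1:R) else 0) ⊗ₜ
        (χ ∘ₗ ((LinearMap.smulRightₗ : ((Fin n → R) →ₗ[R] R) →ₗ[R] I →ₗ[R] _)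
          (LinearMap.proj i))))) f
      = χ ((LinearMap.smulRightₗ : ((Fin n → R) →ₗ[R] R) →ₗ[R] I →ₗ[R] _)
          (LinearMap.proj i) (f fun j => if i = j then (1:R) else 0)) := fun i => rfl
  rw [Finset.sum_congr rfl fun i _ => this i, ← map_sum]
  congr 1
  apply LinearMap.ext
  intro v
  rw [LinearMap.sum_apply]
  simp only [LinearMap.smulRightₗ_apply, LinearMap.proj_apply]
  exact (LinearMap.pi_apply_eq_sum_univ f v).symm

lemma theta_surjective_of_finite (X : Type u) [AddCommGroup X] [Module R X]
    [Module.Finite R X] (hE : Module.Injective R E) :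
    Function.Surjective (theta (R := R) (I := I) (E := E) X) := by
  obtain ⟨n, p, hp⟩ := Module.Finite.exists_fin' R X
  intro χ
  have hpinj : Function.Injective (LinearMap.lcomp R I p) := by
    intro f g hfg
    apply LinearMap.ext
    intro x
    obtain ⟨v, rfl⟩ := hp x
    exact LinearMap.congr_fun hfg v
  obtain ⟨χ', hχ'⟩ := hE.out (LinearMap.lcomp R I p) hpinj χ
  obtain ⟨t, ht⟩ := theta_pi_surjective (R := R) (I := I) (E := E) n χ'
  refine ⟨p.rTensor _ t, ?_⟩
  have := LinearMap.congr_fun (theta_natural (R := R) (I := I) (E := E) p) t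
  simp only [LinearMap.coe_comp, Function.comp_apply] at this
  rw [this, ht]
  apply LinearMap.ext
  intro f
  exact hχ' f

lemma theta_ring_injective :
    Function.Injective (theta (R := R) (I := I) (E := E) R) := by
  rw [← LinearMap.ker_eq_bot]
  rw [eq_bot_iff]
  intro t ht
  rw [LinearMap.mem_ker] at ht
  set ψ := TensorProduct.lid R (I →ₗ[R] E) t with hψ
  have htψ : t = (1 : R) ⊗ₜ ψ := by
    apply (TensorProduct.lid R (I →ₗ[R] E)).injective
    simp [hψ]
  have hψ0 : ψ = 0 := by
    apply LinearMap.ext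
    intro y
    have := LinearMap.congr_fun ht (LinearMap.toSpanSingleton R I y)
    rw [htψ] at this
    simpa using this
  simp [htψ, hψ0]
end

section
open TensorProduct LinearMap
variable {R : Type u} [CommRing R] {I E : Type u} [AddCommGroup I] [Module R I]
  [AddCommGroup E] [Module R E]

/-- For an injective cogenerator `E`, every nonzero element admits a functional into `E`
not vanishing on it. -/
lemma exists_functional (hE : IsInjectiveCogenerator R E) {A : Type u} [AddCommGroup A]
    [Module R A] {x : A} (hx : x ≠ 0) : ∃ ψ : A →ₗ[R] E, ψ x ≠ 0 := by
  set N := Submodule.span R ({x} : Set A) with hN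
  have hxN : x ∈ N := Submodule.mem_span_singleton_self x
  obtain ⟨g, hg⟩ := hE.2 ↥N ⟨⟨x, hxN⟩, by simpa using hx⟩
  have hgx : g ⟨x, hxN⟩ ≠ 0 := by
    intro h0
    apply hg
    apply LinearMap.ext
    rintro ⟨y, hy⟩
    obtain ⟨r, rfl⟩ := Submodule.mem_span_singleton.mp hy
    have : (⟨r • x, hy⟩ : N) = r • (⟨x, hxN⟩ : N) := rfl
    rw [this, map_smul, h0, smul_zero]
    rfl
  obtain ⟨ψ, hψ⟩ := hE.1.out N.subtype (Submodule.injective_subtype N) g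
  exact ⟨ψ, by simpa using (hψ ⟨x, hxN⟩ ▸ hgx : ψ (N.subtype ⟨x, hxN⟩) ≠ 0)⟩

/-- The key homological step: if `Hom(I, E)` is flat for an injective cogenerator `E` over a
Noetherian ring, then `I` satisfies Baer's criterion. -/
lemma baer_of_dual_flat [IsNoetherianRing R] (hE : IsInjectiveCogenerator R E)
    (hF : Module.Flat R (I →ₗ[R] E)) : Module.Baer R I := by
  intro a f
  set res : (R →ₗ[R] I) →ₗ[R] (↥a →ₗ[R] I) := LinearMap.lcomp R I a.subtype with hres
  suffices hsurj : Function.Surjective res by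
    obtain ⟨φ, hφ⟩ := hsurj f
    exact ⟨φ, fun x mem => LinearMap.congr_fun hφ ⟨x, mem⟩⟩
  -- Suppose not; produce a nonzero functional on `Hom(a, I)` killing the range of `res`.
  by_contra hns
  rw [← LinearMap.range_eq_top] at hns
  obtain ⟨f₀, hf₀⟩ : ∃ f₀ : ↥a →ₗ[R] I, f₀ ∉ LinearMap.range res := by
    by_contra hc
    push_neg at hc
    exact hns (Submodule.eq_top_iff'.mpr hc)
  have hq0 : (LinearMap.range res).mkQ f₀ ≠ 0 := by
    rw [Submodule.mkQ_apply, ne_eq, Submodule.Quotient.mk_eq_zero]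
    exact hf₀
  obtain ⟨g, hg0⟩ := exists_functional hE hq0
  set χ : (↥a →ₗ[R] I) →ₗ[R] E := g ∘ₗ (LinearMap.range res).mkQ with hχ
  have hχ0 : χ ≠ 0 := by
    intro h0
    apply hg0
    exact LinearMap.congr_fun h0 f₀
  have hχres : (LinearMap.lcomp R E res) χ = 0 := by
    apply LinearMap.ext
    intro φ
    have : (LinearMap.range res).mkQ (res φ) = 0 := by
      rw [Submodule.mkQ_apply, Submodule.Quotient.mk_eq_zero]
      exact ⟨φ, rfl⟩
    simp [hχ, this]
  -- Use surjectivity of `theta a` and injectivity of `theta R` plus flatness.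
  obtain ⟨t, ht⟩ := theta_surjective_of_finite (R := R) (I := I) (E := E) ↥a hE.1 χ
  have hnat := LinearMap.congr_fun (theta_natural (R := R) (I := I) (E := E) a.subtype) t
  simp only [LinearMap.coe_comp, Function.comp_apply] at hnat
  rw [ht] at hnat
  have hres_eq : LinearMap.lcomp R I a.subtype = res := rfl
  rw [hres_eq, hχres] at hnat
  have ht0 : (a.subtype.rTensor (I →ₗ[R] E)) t = 0 :=
    theta_ring_injective (by rw [hnat, map_zero])
  have : t = 0 := by
    have := Module.Flat.rTensor_preserves_injective_linearMap (M := I →ₗ[R] E)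
      a.subtype (Submodule.injective_subtype a)
    exact this (by rw [ht0, map_zero])
  apply hχ0
  rw [← ht, this, map_zero]
end

/-- Over a commutative Noetherian ring, if `Hom_R(i, E)` is a flat
cover for some injective cogenerator `E`, then `i` is an injective envelope. -/
theorem injectiveEnvelope_of_dual_flatCover [IsNoetherianRing R]
    {M I : Type u} [AddCommGroup M] [AddCommGroup I] [Module R M] [Module R I]
    (i : M →ₗ[R] I) (E : Type u) [AddCommGroup E] [Module R E]
    (hE : IsInjectiveCogenerator R E) (h : IsFlatCover R (LinearMap.lcomp R E i)) :
    IsInjectiveEnvelope R i := by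
  obtain ⟨⟨hFlat, hpre⟩, hcover⟩ := h
  -- Step 1: `i` is injective.
  have hinj : Function.Injective i := by
    rw [injective_iff_map_eq_zero]
    intro x hx
    by_contra hx0
    obtain ⟨g', hg'⟩ := exists_functional hE hx0
    obtain ⟨h0, hfac⟩ := hpre R (Module.Flat.self : Module.Flat R R)
      (LinearMap.toSpanSingleton R (M →ₗ[R] E) g')
    have h1 : (LinearMap.lcomp R E i) (h0 1) = g' := by
      have := LinearMap.congr_fun hfac 1
      simpa using this
    apply hg'
    calc g' x = (h0 1) (i x) := (LinearMap.congr_fun h1 x).symm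
    _ = 0 := by rw [hx, map_zero]
  -- Step 2: `I` is injective.
  have hIinj : Module.Injective R I := (baer_of_dual_flat hE hFlat).injective
  refine ⟨hIinj, hinj, ?_⟩
  -- Step 3: essentiality.
  intro N hN hNbot
  have hi' : Function.Injective (N.mkQ ∘ₗ i) := by
    rw [injective_iff_map_eq_zero]
    intro x hx
    have hmem : i x ∈ N := by
      rw [← N.ker_mkQ, LinearMap.mem_ker]
      exact hx
    have : i x ∈ N ⊓ LinearMap.range i := ⟨hmem, ⟨x, rfl⟩⟩
    rw [hNbot] at this
    exact (injective_iff_map_eq_zero i).mp hinj x this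
  obtain ⟨j, hj⟩ := hIinj.out (N.mkQ ∘ₗ i) hi' i
  have hcomp : (LinearMap.lcomp R E i) ∘ₗ (LinearMap.lcomp R E (j ∘ₗ N.mkQ))
      = LinearMap.lcomp R E i := by
    apply LinearMap.ext
    intro φ
    apply LinearMap.ext
    intro x
    simpa using congrArg φ (hj x)
  have hbij := hcover _ hcomp
  obtain ⟨n, hnN, hn0⟩ := (Submodule.ne_bot_iff N).mp hN
  obtain ⟨ψ, hψ⟩ := exists_functional hE hn0
  obtain ⟨φ, hφ⟩ := hbij.2 ψ
  apply hψ
  have hn' : N.mkQ n = 0 := by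
    rw [Submodule.mkQ_apply, Submodule.Quotient.mk_eq_zero]
    exact hnN
  calc ψ n = φ (j (N.mkQ n)) := (LinearMap.congr_fun hφ n).symm
  _ = 0 := by rw [hn', map_zero, map_zero]
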